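/- Let k ≥ 2 and let m be the Lie algebra with basis X, E_1,...,E_k, F_{k-1}, F_k, N and relations [X,E_i] = E_{i+1} (1 ≤ i ≤ k-1), [X,F_{k-1}] = F_k, [F_{k-1},E_1] = N, all other brackets zero. Assign degrees: deg X = deg E_1 = deg F_{k-1} = -1, deg E_i = -i for 2 ≤ i ≤ k, deg F_k = deg N = -2. Then m is a graded Lie algebra (brackets respect degrees), it is nilpotent of nilpotency class k, and m is generated as a Lie algebra by its degree -1 component span{X, E_1, F_{k-1}}. -/

import Mathlib

/-- Structure constants (in one direction) for the algebra `m` with basis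
`X, E_1, …, E_k, F_{k-1}, F_k, N`, encoded on `Fin (k+4)` as:
`0 ↦ X`, `i ↦ E_i` for `1 ≤ i ≤ k`, `k+1 ↦ F_{k-1}`, `k+2 ↦ F_k`, `k+3 ↦ N`. -/
def mRel (k : ℕ) (i j l : Fin (k + 4)) : ℝ :=
  if i.val = 0 ∧ 1 ≤ j.val ∧ j.val ≤ k - 1 ∧ l.val = j.val + 1 then 1
  else if i.val = 0 ∧ j.val = k + 1 ∧ l.val = k + 2 then 1
  else if i.val = k + 1 ∧ j.val = 1 ∧ l.val = k + 3 then 1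
  else 0

/-- The skew-symmetrized structure constants of `m`. -/
def mC (k : ℕ) (i j l : Fin (k + 4)) : ℝ := mRel k i j l - mRel k j i l

/-- The bracket of `m` on `ℝ^{k+4}`. -/
def mBracket (k : ℕ) (f g : Fin (k + 4) → ℝ) : Fin (k + 4) → ℝ :=
  fun l => ∑ i : Fin (k + 4), ∑ j : Fin (k + 4), f i * g j * mC k i j l

/-- The degrees of the basis elements: `deg X = deg E_1 = deg F_{k-1} = -1`,
`deg E_i = -i`, `deg F_k = deg N = -2`. -/
def mDeg (k : ℕ) (i : Fin (k + 4)) : ℤ :=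
  if i.val = 0 then -1
  else if i.val ≤ k then -(i.val : ℤ)
  else if i.val = k + 1 then -1
  else -2

/-- Iterated (left-nested) bracket of `n+1` elements of `m`. -/
def mNest (k : ℕ) : (n : ℕ) → (Fin (n + 1) → (Fin (k + 4) → ℝ)) → (Fin (k + 4) → ℝ)
  | 0, f => f 0
  | n + 1, f => mBracket k (f 0) (mNest k n (fun i => f i.succ))

lemma mRel_deg (k : ℕ) (i j l : Fin (k+4)) (h : mRel k i j l ≠ 0) :
    mDeg k l = mDeg k i + mDeg k j := by
  unfold mRel at h
  unfold mDeg
  split_ifs at h with h1 h2 h3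
  · split_ifs <;> omega
  · split_ifs <;> omega
  · split_ifs <;> omega
  · exact absurd rfl h

lemma mC_deg (k : ℕ) (i j l : Fin (k+4)) (h : mC k i j l ≠ 0) :
    mDeg k l = mDeg k i + mDeg k j := by
  by_cases h1 : mRel k i j l = 0
  · by_cases h2 : mRel k j i l = 0
    · exact absurd (by simp [mC, h1, h2]) h
    · rw [mRel_deg k j i l h2]; ring
  · exact mRel_deg k i j l h1

lemma mBracket_single (k : ℕ) (a b : Fin (k+4)) :
    mBracket k (Pi.single a 1) (Pi.single b 1) = fun l => mC k a b l := by
  funext l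
  simp [mBracket, Pi.single_apply, ite_mul, Finset.sum_ite_eq]

/-- Every element is supported in degrees `≤ -d`. -/
def mBdd (k d : ℕ) (f : Fin (k+4) → ℝ) : Prop := ∀ l, f l ≠ 0 → mDeg k l ≤ -(d:ℤ)

lemma mBdd_one (k : ℕ) (f : Fin (k+4) → ℝ) : mBdd k 1 f := by
  intro l _
  unfold mDeg; split_ifs <;> omega

lemma mBdd_bracket (k d e : ℕ) (f g : Fin (k+4) → ℝ)
    (hf : mBdd k d f) (hg : mBdd k e g) : mBdd k (d+e) (mBracket k f g) := by
  intro l hl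
  unfold mBracket at hl
  obtain ⟨i, -, hi⟩ := Finset.exists_ne_zero_of_sum_ne_zero hl
  obtain ⟨j, -, hj⟩ := Finset.exists_ne_zero_of_sum_ne_zero hi
  have hfi : f i ≠ 0 := fun h => hj (by simp [h])
  have hgj : g j ≠ 0 := fun h => hj (by simp [h])
  have hc : mC k i j l ≠ 0 := fun h => hj (by simp [h])
  have := mC_deg k i j l hc
  have := hf i hfi
  have := hg j hgj
  push_cast
  omega

lemma mBdd_nest (k : ℕ) (n : ℕ) (f : Fin (n+1) → (Fin (k+4) → ℝ)) :
    mBdd k (n+1) (mNest k n f) := by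
  induction n with
  | zero => exact mBdd_one k _
  | succ n ih =>
    have := mBdd_bracket k 1 (n+1) (f 0) (mNest k n (fun i => f i.succ))
      (mBdd_one k _) (ih _)
    rw [show 1 + (n+1) = n+1+1 by ring] at this
    exact this

lemma bracket_X_E (k : ℕ) (hk : 2 ≤ k) (j : ℕ) (h1 : 1 ≤ j) (h2 : j ≤ k - 1) :
    mBracket k (Pi.single (⟨0, by simp⟩ : Fin (k+4)) (1:ℝ)) (Pi.single (⟨j, by omega⟩ : Fin (k+4)) 1)
      = Pi.single (⟨j+1, by omega⟩ : Fin (k+4)) 1 := by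
  rw [mBracket_single]
  funext l
  rw [Pi.single_apply]
  simp only [mC, mRel]
  have hl := l.isLt
  simp only [Fin.ext_iff]
  split_ifs <;> norm_num at * <;> omega

lemma bracket_X_F (k : ℕ) (hk : 2 ≤ k) :
    mBracket k (Pi.single (⟨0, by simp⟩ : Fin (k+4)) (1:ℝ)) (Pi.single (⟨k+1, by simp⟩ : Fin (k+4)) 1)
      = Pi.single (⟨k+2, by omega⟩ : Fin (k+4)) 1 := by
  rw [mBracket_single]
  funext l
  rw [Pi.single_apply]
  simp only [mC, mRel]
  have hl := l.isLt
  simp only [Fin.ext_iff]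
  split_ifs <;> norm_num at * <;> omega

lemma bracket_F_E (k : ℕ) (hk : 2 ≤ k) :
    mBracket k (Pi.single (⟨k+1, by simp⟩ : Fin (k+4)) 1) (Pi.single (⟨1, by simp⟩ : Fin (k+4)) 1)
      = Pi.single (⟨k+3, by omega⟩ : Fin (k+4)) 1 := by
  rw [mBracket_single]
  funext l
  rw [Pi.single_apply]
  simp only [mC, mRel]
  have hl := l.isLt
  simp only [Fin.ext_iff]
  split_ifs <;> norm_num at * <;> omega

lemma nest_XE (k : ℕ) (hk : 2 ≤ k) (m : ℕ) (hm : m ≤ k - 1) :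
    mNest k m (fun i => if i.val = m then Pi.single (⟨1, by simp⟩ : Fin (k+4)) 1
        else Pi.single (⟨0, by simp⟩ : Fin (k+4)) (1:ℝ))
      = Pi.single (⟨m+1, by omega⟩ : Fin (k+4)) 1 := by
  induction m with
  | zero => simp [mNest]
  | succ m ih =>
    have hm' : m ≤ k - 1 := by omega
    show mBracket k _ _ = _
    have htail : (fun i : Fin (m+1) =>
        if (Fin.succ i).val = m + 1 then (Pi.single (⟨1, by simp⟩ : Fin (k+4)) (1:ℝ) : Fin (k+4) → ℝ)
        else Pi.single (⟨0, by simp⟩ : Fin (k+4)) (1:ℝ))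
        = (fun i : Fin (m+1) => if i.val = m then (Pi.single (⟨1, by simp⟩ : Fin (k+4)) (1:ℝ) : Fin (k+4) → ℝ)
        else Pi.single (⟨0, by simp⟩ : Fin (k+4)) (1:ℝ)) := by
      funext i
      simp only [Fin.val_succ, add_left_inj]
    rw [htail, ih hm']
    have h0 : ((0 : Fin (m+1+1)).val = m + 1) = False := by
      simp
    beta_reduce
    rw [if_neg (show ¬ ((0 : Fin (m+1+1)).val = m + 1) by simp)]
    exact bracket_X_E k hk (m+1) (by omega) (by omega)

theorem m_graded_nilpotent_generated (k : ℕ) (hk : 2 ≤ k) :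
    (∀ i j l : Fin (k + 4), mC k i j l ≠ 0 → mDeg k l = mDeg k i + mDeg k j) ∧
    (∀ f : Fin (k + 1) → (Fin (k + 4) → ℝ), mNest k k f = 0) ∧
    (∃ f : Fin (k - 1 + 1) → (Fin (k + 4) → ℝ), mNest k (k - 1) f ≠ 0) ∧
    (∀ S : Submodule ℝ (Fin (k + 4) → ℝ),
      Pi.single (⟨0, by omega⟩ : Fin (k + 4)) (1 : ℝ) ∈ S →
      Pi.single (⟨1, by omega⟩ : Fin (k + 4)) (1 : ℝ) ∈ S →
      Pi.single (⟨k + 1, by omega⟩ : Fin (k + 4)) (1 : ℝ) ∈ S →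
      (∀ f g, f ∈ S → g ∈ S → mBracket k f g ∈ S) →
      S = ⊤) := by
  refine ⟨mC_deg k, ?_, ?_, ?_⟩
  · -- nilpotency: nests of length k+1 vanish
    intro f
    funext l
    by_contra h
    have h1 := mBdd_nest k k f l h
    have h2 : -(k : ℤ) ≤ mDeg k l := by
      unfold mDeg; split_ifs <;> omega
    push_cast at h1
    omega
  · -- a nonzero nest of length k
    refine ⟨fun i => if i.val = k - 1 then Pi.single (⟨1, by omega⟩ : Fin (k+4)) 1
        else Pi.single (⟨0, by omega⟩ : Fin (k+4)) 1, ?_⟩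
    rw [nest_XE k hk (k-1) le_rfl]
    intro h
    have := congrFun h ⟨k-1+1, by omega⟩
    simp at this
  · -- generation
    intro S hX hE1 hF hbr
    have hE : ∀ j : ℕ, (h1 : 1 ≤ j) → (h2 : j ≤ k) →
        Pi.single (⟨j, by omega⟩ : Fin (k+4)) (1:ℝ) ∈ S := by
      intro j
      induction j with
      | zero => omega
      | succ j ih =>
        intro h1 h2
        rcases Nat.eq_or_lt_of_le h1 with h | h
        · obtain rfl : j = 0 := by omega
          exact hE1
        · have hj : Pi.single (⟨j, by omega⟩ : Fin (k+4)) (1:ℝ) ∈ S := ih (by omega) (by omega)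
          have := hbr _ _ hX hj
          rwa [bracket_X_E k hk j (by omega) (by omega)] at this
    have hFk : Pi.single (⟨k+2, by omega⟩ : Fin (k+4)) (1:ℝ) ∈ S := by
      have := hbr _ _ hX hF
      rwa [bracket_X_F k hk] at this
    have hN : Pi.single (⟨k+3, by omega⟩ : Fin (k+4)) (1:ℝ) ∈ S := by
      have := hbr _ _ hF hE1
      rwa [bracket_F_E k hk] at this
    have hall : ∀ l : Fin (k+4), Pi.single l (1:ℝ) ∈ S := by
      rintro ⟨v, hv⟩
      rcases Nat.lt_or_ge v 1 with h | h
      · obtain rfl : v = 0 := by omega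
        exact hX
      rcases Nat.lt_or_ge v (k+1) with h' | h'
      · exact hE v h (by omega)
      rcases Nat.eq_or_lt_of_le h' with h'' | h''
      · obtain rfl : v = k + 1 := h''.symm
        exact hF
      rcases Nat.eq_or_lt_of_le h'' with h3 | h3
      · obtain rfl : v = k + 2 := by omega
        exact hFk
      · obtain rfl : v = k + 3 := by omega
        exact hN
    rw [eq_top_iff]
    intro f _
    rw [← Finset.univ_sum_single f]
    refine Submodule.sum_mem S ?_
    intro l _
    have : Pi.single l (f l) = f l • (Pi.single l (1:ℝ) : Fin (k+4) → ℝ) := by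
      funext x
      rw [Pi.smul_apply, Pi.single_apply, Pi.single_apply]
      split_ifs <;> simp
    rw [this]
    exact Submodule.smul_mem S _ (hall l)
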